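/- Let G be a graph, v a vertex of G, k a natural number, and let K_1, …, K_t be pairwise disjoint nonempty cliques of G − v such that, in the subgraph of G induced by K_1 ∪ … ∪ K_t, every neighbor of a vertex of K_i lies in K_{i−1} ∪ K_i ∪ K_{i+1} (with K_0 = K_{t+1} = ∅). If v has a neighbor in at least k + 5 of the cliques K_1, …, K_t, then for every set S of vertices with |S| ≤ k and v ∉ S, the graph G − S contains three pairwise nonadjacent neighbors of v; that is, G − S contains an induced claw centered at v. -/

import Mathlib

/-- With `v` and pairwise disjoint nonempty cliques `K_1, …, K_t`
of `G - v` as before (locality in the subgraph induced by their union), if `v`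
has a neighbor in at least `k + 5` of the cliques, then for every vertex set
`S` with `|S| ≤ k` and `v ∉ S`, the graph `G - S` contains three pairwise
nonadjacent neighbors of `v`, i.e. an induced claw centered at `v`. -/
theorem stmt_5 {V : Type*} [DecidableEq V] (G : SimpleGraph V) (v : V) (k : ℕ)
    (t : ℕ) (K : ℕ → Finset V)
    (hK0 : K 0 = ∅) (hKt1 : K (t + 1) = ∅)
    (hv : ∀ i, 1 ≤ i → i ≤ t → v ∉ K i)
    (hne : ∀ i, 1 ≤ i → i ≤ t → (K i).Nonempty)
    (hclique : ∀ i, 1 ≤ i → i ≤ t → G.IsClique (K i : Set V))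
    (hdisj : ∀ i j, 1 ≤ i → i ≤ t → 1 ≤ j → j ≤ t → i ≠ j →
      Disjoint (K i) (K j))
    (hloc : ∀ i, 1 ≤ i → i ≤ t → ∀ u ∈ K i, ∀ w : V,
      (∃ j, 1 ≤ j ∧ j ≤ t ∧ w ∈ K j) → G.Adj u w →
      w ∈ K (i - 1) ∪ K i ∪ K (i + 1))
    (hmany : k + 5 ≤ {j : ℕ | 1 ≤ j ∧ j ≤ t ∧ ∃ w ∈ K j, G.Adj v w}.ncard)
    (S : Finset V) (hS : S.card ≤ k) (hvS : v ∉ S) :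
    ∃ a b c : V, a ∉ S ∧ b ∉ S ∧ c ∉ S ∧
      G.Adj v a ∧ G.Adj v b ∧ G.Adj v c ∧
      a ≠ b ∧ a ≠ c ∧ b ≠ c ∧ ¬ G.Adj a b ∧ ¬ G.Adj a c ∧ ¬ G.Adj b c := by
  classical
  -- nonadjacency across far cliques
  have hnadj : ∀ i j, 1 ≤ i → 1 ≤ j → j ≤ t → i + 2 ≤ j →
      ∀ u ∈ K i, ∀ x ∈ K j, ¬ G.Adj u x := by
    intro i j hi1 hj1 hjt hij u hu x hx hadj
    have hit : i ≤ t := by omega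
    have hmem := hloc i hi1 hit u hu x ⟨j, hj1, hjt, hx⟩ hadj
    simp only [Finset.mem_union] at hmem
    rcases hmem with (h | h) | h
    · rcases Nat.eq_or_lt_of_le hi1 with h1 | h1
      · rw [← h1] at h; simp [hK0] at h
      · exact (Finset.disjoint_left.mp
          (hdisj (i-1) j (by omega) (by omega) hj1 hjt (by omega)) h) hx
    · exact (Finset.disjoint_left.mp
        (hdisj i j hi1 hit hj1 hjt (by omega)) h) hx
    · exact (Finset.disjoint_left.mp
        (hdisj (i+1) j (by omega) (by omega) hj1 hjt (by omega)) h) hx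
  set Jset : Finset ℕ :=
    (Finset.Icc 1 t).filter (fun j => ∃ w ∈ K j, G.Adj v w) with hJset
  have hsetJ : {j : ℕ | 1 ≤ j ∧ j ≤ t ∧ ∃ w ∈ K j, G.Adj v w} = ↑Jset := by
    ext j; simp [hJset, Finset.mem_filter, Finset.mem_Icc, and_assoc]
  rw [hsetJ, Set.ncard_coe_finset] at hmany
  -- witness function
  set f : ℕ → V := fun j =>
    if h : ∃ w ∈ K j, G.Adj v w then h.choose else v with hf
  have hfK : ∀ j ∈ Jset, f j ∈ K j := by
    intro j hj
    rw [hJset, Finset.mem_filter] at hj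
    simp only [hf, dif_pos hj.2]
    exact hj.2.choose_spec.1
  have hfA : ∀ j ∈ Jset, G.Adj v (f j) := by
    intro j hj
    rw [hJset, Finset.mem_filter] at hj
    simp only [hf, dif_pos hj.2]
    exact hj.2.choose_spec.2
  have hJrange : ∀ j ∈ Jset, 1 ≤ j ∧ j ≤ t := by
    intro j hj
    rw [hJset, Finset.mem_filter, Finset.mem_Icc] at hj
    exact hj.1
  have hfinj : ∀ i ∈ Jset, ∀ j ∈ Jset, f i = f j → i = j := by
    intro i hi j hj hfe
    by_contra hne'
    obtain ⟨hi1, hit⟩ := hJrange i hi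
    obtain ⟨hj1, hjt⟩ := hJrange j hj
    exact (Finset.disjoint_left.mp (hdisj i j hi1 hit hj1 hjt hne')
      (hfK i hi)) (hfe ▸ hfK j hj)
  -- bad indices
  set B : Finset ℕ := Jset.filter (fun j => f j ∈ S) with hB
  have hBcard : B.card ≤ S.card := by
    apply Finset.card_le_card_of_injOn f
    · intro j hj; rw [hB, Finset.mem_coe, Finset.mem_filter] at hj; exact hj.2
    · intro i hi j hj hfe
      simp only [Finset.mem_coe] at hi hj
      rw [hB, Finset.mem_filter] at hi hj
      exact hfinj i hi.1 j hj.1 hfe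
  set Good : Finset ℕ := Jset.filter (fun j => f j ∉ S) with hG
  have hGcard : 5 ≤ Good.card := by
    have key : B.card + Good.card = Jset.card :=
      Finset.card_filter_add_card_filter_not
        (s := Jset) (p := fun j => f j ∈ S)
    omega
  have hGsub : Good ⊆ Jset := Finset.filter_subset _ _
  -- pick three spread-out indices
  have hGne : Good.Nonempty := Finset.card_pos.mp (by omega)
  set a := Good.min' hGne with ha
  have haG : a ∈ Good := Finset.min'_mem _ _
  set G2 : Finset ℕ := Good.filter (fun x => a + 2 ≤ x) with hG2
  have hG2card : 3 ≤ G2.card := by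
    have key : G2.card + (Good.filter (fun x => ¬ (a + 2 ≤ x))).card = Good.card :=
      Finset.card_filter_add_card_filter_not
        (s := Good) (p := fun x => a + 2 ≤ x)
    have hsub : Good.filter (fun x => ¬ (a + 2 ≤ x)) ⊆ {a, a+1} := by
      intro x hx
      rw [Finset.mem_filter] at hx
      have := Finset.min'_le Good x hx.1
      simp only [Finset.mem_insert, Finset.mem_singleton]
      omega
    have h1 := Finset.card_le_card hsub
    have h2 : ({a, a+1} : Finset ℕ).card ≤ 2 :=
      Finset.card_insert_le _ _ |>.trans (by simp)
    omega
  have hG2ne : G2.Nonempty := Finset.card_pos.mp (by omega)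
  set b := G2.min' hG2ne with hb
  have hbG2 : b ∈ G2 := Finset.min'_mem _ _
  have hbG : b ∈ Good := (Finset.mem_filter.mp hbG2).1
  have hab : a + 2 ≤ b := (Finset.mem_filter.mp hbG2).2
  set G3 : Finset ℕ := G2.filter (fun x => b + 2 ≤ x) with hG3
  have hG3card : 1 ≤ G3.card := by
    have key : G3.card + (G2.filter (fun x => ¬ (b + 2 ≤ x))).card = G2.card :=
      Finset.card_filter_add_card_filter_not
        (s := G2) (p := fun x => b + 2 ≤ x)
    have hsub : G2.filter (fun x => ¬ (b + 2 ≤ x)) ⊆ {b, b+1} := by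
      intro x hx
      rw [Finset.mem_filter] at hx
      have := Finset.min'_le G2 x hx.1
      simp only [Finset.mem_insert, Finset.mem_singleton]
      omega
    have h1 := Finset.card_le_card hsub
    have h2 : ({b, b+1} : Finset ℕ).card ≤ 2 :=
      Finset.card_insert_le _ _ |>.trans (by simp)
    omega
  have hG3ne : G3.Nonempty := Finset.card_pos.mp (by omega)
  set c := G3.min' hG3ne with hc
  have hcG3 : c ∈ G3 := Finset.min'_mem _ _
  have hcG : c ∈ Good := (Finset.mem_filter.mp ((Finset.mem_filter.mp hcG3).1)).1
  have hbc : b + 2 ≤ c := (Finset.mem_filter.mp hcG3).2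
  -- assemble
  have haJ : a ∈ Jset := hGsub haG
  have hbJ : b ∈ Jset := hGsub hbG
  have hcJ : c ∈ Jset := hGsub hcG
  obtain ⟨ha1, hat⟩ := hJrange a haJ
  obtain ⟨hb1, hbt⟩ := hJrange b hbJ
  obtain ⟨hc1, hct⟩ := hJrange c hcJ
  refine ⟨f a, f b, f c,
    (Finset.mem_filter.mp haG).2, (Finset.mem_filter.mp hbG).2,
    (Finset.mem_filter.mp hcG).2,
    hfA a haJ, hfA b hbJ, hfA c hcJ, ?_, ?_, ?_, ?_, ?_, ?_⟩
  · intro h; exact absurd (hfinj a haJ b hbJ h) (by omega)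
  · intro h; exact absurd (hfinj a haJ c hcJ h) (by omega)
  · intro h; exact absurd (hfinj b hbJ c hcJ h) (by omega)
  · exact hnadj a b ha1 hb1 hbt hab (f a) (hfK a haJ) (f b) (hfK b hbJ)
  · exact hnadj a c ha1 hc1 hct (by omega) (f a) (hfK a haJ) (f c) (hfK c hcJ)
  · exact hnadj b c hb1 hc1 hct hbc (f b) (hfK b hbJ) (f c) (hfK c hcJ)
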